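/- arXiv:2408.07252 — 2 statements merged into one kernel-verified Lean document; each statement's English description precedes it below -/
import Mathlib

section
/- Let A and M be real m×m matrices. Suppose the matrix-valued function t ↦ e^{tA}·M·e^{tAᵀ} is integrable on [0,∞) and tends to the zero matrix as t → ∞. Then the matrix W = ∫₀^∞ e^{tA}·M·e^{tAᵀ} dt satisfies the Lyapunov equation A·W + W·Aᵀ + M = 0. -/
open Matrix MeasureTheory Filter

open NormedSpace

private lemma gram_hasDerivAt {m : ℕ} (A M : Matrix (Fin m) (Fin m) ℝ) (t : ℝ) (i j : Fin m) :
    HasDerivAt (fun u : ℝ => (exp (u • A) * M * exp (u • Aᵀ)) i j)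
      ((A * (exp (t • A) * M * exp (t • Aᵀ))
        + (exp (t • A) * M * exp (t • Aᵀ)) * Aᵀ) i j) t := by
  letI : SeminormedRing (Matrix (Fin m) (Fin m) ℝ) := Matrix.linftyOpSemiNormedRing
  letI : NormedRing (Matrix (Fin m) (Fin m) ℝ) := Matrix.linftyOpNormedRing
  letI : NormedAlgebra ℝ (Matrix (Fin m) (Fin m) ℝ) := Matrix.linftyOpNormedAlgebra
  have h1 : HasDerivAt (fun u : ℝ => exp (u • A)) (A * exp (t • A)) t :=
    hasDerivAt_exp_smul_const' A t
  have h2 : HasDerivAt (fun u : ℝ => exp (u • Aᵀ)) (exp (t • Aᵀ) * Aᵀ) t :=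
    hasDerivAt_exp_smul_const Aᵀ t
  have h3 := (h1.mul_const M).mul h2
  let ℓ : Matrix (Fin m) (Fin m) ℝ →ₗ[ℝ] ℝ :=
    { toFun := fun X => X i j, map_add' := fun _ _ => rfl, map_smul' := fun _ _ => rfl }
  have h4 := ℓ.toContinuousLinearMap.hasFDerivAt.comp_hasDerivAt t h3
  refine h4.congr_deriv ?_
  show ℓ _ = _
  show (A * exp (t • A) * M * exp (t • Aᵀ) + exp (t • A) * M * (exp (t • Aᵀ) * Aᵀ)) i j = _
  simp [Matrix.add_apply, Matrix.mul_apply, mul_assoc, Finset.mul_sum, Finset.sum_mul]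

/-- If `t ↦ e^{tA}·M·e^{tAᵀ}` is integrable on `[0,∞)` and tends to the zero
matrix as `t → ∞`, then `W = ∫₀^∞ e^{tA}·M·e^{tAᵀ} dt` satisfies `A·W + W·Aᵀ + M = 0`. -/
theorem gramian_satisfies_lyapunov
    {m : ℕ} (A M : Matrix (Fin m) (Fin m) ℝ)
    (hint : ∀ i j : Fin m,
      IntegrableOn
        (fun t : ℝ =>
          (NormedSpace.exp (t • A) * M * NormedSpace.exp (t • Aᵀ)) i j)
        (Set.Ici 0))
    (hlim : Tendsto
      (fun t : ℝ => NormedSpace.exp (t • A) * M * NormedSpace.exp (t • Aᵀ))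
      atTop (nhds (0 : Matrix (Fin m) (Fin m) ℝ))) :
    A * Matrix.of (fun i j =>
        ∫ t in Set.Ici (0 : ℝ),
          (NormedSpace.exp (t • A) * M * NormedSpace.exp (t • Aᵀ)) i j) +
      Matrix.of (fun i j =>
        ∫ t in Set.Ici (0 : ℝ),
          (NormedSpace.exp (t • A) * M * NormedSpace.exp (t • Aᵀ)) i j) * Aᵀ +
      M = 0 := by
  set F : ℝ → Matrix (Fin m) (Fin m) ℝ :=
    fun t => exp (t • A) * M * exp (t • Aᵀ) with hF
  -- entrywise integrability of the derivative
  have hint' : ∀ i j : Fin m,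
      IntegrableOn (fun t : ℝ => (A * F t + F t * Aᵀ) i j) (Set.Ioi 0) := by
    intro i j
    have : (fun t : ℝ => (A * F t + F t * Aᵀ) i j) =
        fun t => (∑ k, A i k * F t k j) + (∑ k, F t i k * Aᵀ k j) := by
      funext t; simp [Matrix.add_apply, Matrix.mul_apply]
    rw [this]
    refine Integrable.add ?_ ?_
    · exact integrable_finset_sum _ fun k _ =>
        (((hint k j).mono_set Set.Ioi_subset_Ici_self).const_mul _)
    · exact integrable_finset_sum _ fun k _ =>
        (((hint i k).mono_set Set.Ioi_subset_Ici_self).mul_const _)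
  -- entrywise limit
  have hlim' : ∀ i j : Fin m, Tendsto (fun t => F t i j) atTop (nhds 0) := by
    intro i j
    have hc : Continuous fun X : Matrix (Fin m) (Fin m) ℝ => X i j :=
      continuous_apply_apply i j
    simpa [Function.comp_def] using (hc.tendsto _).comp hlim
  -- FTC on [0, ∞)
  have key : ∀ i j : Fin m,
      ∫ t in Set.Ioi (0 : ℝ), (A * F t + F t * Aᵀ) i j = -(M i j) := by
    intro i j
    have := integral_Ioi_of_hasDerivAt_of_tendsto'
      (f := fun t => F t i j) (f' := fun t => (A * F t + F t * Aᵀ) i j) (a := 0)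
      (fun t _ => gram_hasDerivAt A M t i j) (hint' i j) (hlim' i j)
    rw [this]
    simp [hF, exp_zero]
  ext i j
  have eq1 : ∀ k l : Fin m,
      (∫ t in Set.Ici (0 : ℝ), F t k l) = ∫ t in Set.Ioi (0 : ℝ), F t k l := by
    intro k l; exact integral_Ici_eq_integral_Ioi
  have hI1 : Integrable (fun t : ℝ => ∑ k, A i k * F t k j)
      (volume.restrict (Set.Ioi (0:ℝ))) :=
    integrable_finset_sum _ fun k _ =>
      (((hint k j).mono_set Set.Ioi_subset_Ici_self).const_mul _)
  have hI2 : Integrable (fun t : ℝ => ∑ k, F t i k * Aᵀ k j)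
      (volume.restrict (Set.Ioi (0:ℝ))) :=
    integrable_finset_sum _ fun k _ =>
      (((hint i k).mono_set Set.Ioi_subset_Ici_self).mul_const _)
  have hsum : (A * Matrix.of fun i j => ∫ t in Set.Ici (0:ℝ), F t i j) i j
      + ((Matrix.of fun i j => ∫ t in Set.Ici (0:ℝ), F t i j) * Aᵀ) i j
      = ∫ t in Set.Ioi (0 : ℝ), (A * F t + F t * Aᵀ) i j := by
    have hc : ∀ t : ℝ, (A * F t + F t * Aᵀ) i j =
        (∑ k, A i k * F t k j) + ∑ k, F t i k * Aᵀ k j := by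
      intro t; simp [Matrix.add_apply, Matrix.mul_apply]
    simp_rw [hc]
    rw [MeasureTheory.integral_add hI1 hI2, MeasureTheory.integral_finset_sum _
        (fun k _ => (((hint k j).mono_set Set.Ioi_subset_Ici_self).const_mul _)),
      MeasureTheory.integral_finset_sum _
        (fun k _ => (((hint i k).mono_set Set.Ioi_subset_Ici_self).mul_const _))]
    simp_rw [MeasureTheory.integral_const_mul, MeasureTheory.integral_mul_const]
    simp only [Matrix.mul_apply, Matrix.of_apply, Matrix.transpose_apply, eq1]
    simp only [hF, Matrix.mul_apply]
  have := key i j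
  rw [← hsum] at this
  simp only [Matrix.add_apply, Matrix.zero_apply]
  linarith [this]
end

section
/- Suppose all the following data are real: Λ ∈ ℝ^{l×l} with Λᵀ = Λ; B̂ ∈ ℝ^{l×q}; R̂ ∈ ℝ^{q×q} symmetric positive definite; Q₂ ∈ ℝ^{l×l} symmetric positive semidefinite; M₂ ∈ ℝ^{l×l} symmetric positive semidefinite; b_M ∈ ℝ^l; continuous b, b_Q : [t₀,t₁] → ℝ^l; and q₀ ∈ ℝ^l. Suppose P : [t₀,t₁] → ℝ^{l×l} is continuously differentiable with P(t)ᵀ = P(t) for all t, solving the Riccati equation P' = −PΛ − ΛP − Q₂ + PB̂R̂⁻¹B̂ᵀP with terminal condition P(t₁) = M₂, and s : [t₀,t₁] → ℝ^l is continuously differentiable solving s' = (PB̂R̂⁻¹B̂ᵀ − Λ)s + b_Q + 2Pb with s(t₁) = −b_M. For a continuous control u : [t₀,t₁] → ℝ^q, let q_u denote the solution of q' = Λq + B̂u + b with q(t₀) = q₀, and define the cost J̃(u) = ∫_{t₀}^{t₁} (b_Q(t)·q_u(t) + q_u(t)ᵀQ₂q_u(t) + u(t)ᵀR̂u(t)) dt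 + b_M·q_u(t₁) + q_u(t₁)ᵀM₂q_u(t₁). Let q* be the solution of the closed-loop equation q' = (Λ − B̂R̂⁻¹B̂ᵀP)q + (1/2)B̂R̂⁻¹B̂ᵀs + b with q(t₀) = q₀, and let u*(t) = −R̂⁻¹B̂ᵀP(t)q*(t) + (1/2)R̂⁻¹B̂ᵀs(t). Then for every continuous control u, J̃(u) ≥ J̃(u*). -/
open Matrix MeasureTheory

attribute [local instance] Matrix.normedAddCommGroup Matrix.normedSpace

namespace ExtLQRAux

lemma dp_swap {a b : ℕ} (M : Matrix (Fin a) (Fin b) ℝ) (v : Fin a → ℝ) (w : Fin b → ℝ) :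
    v ⬝ᵥ M *ᵥ w = w ⬝ᵥ Mᵀ *ᵥ v := by
  rw [dotProduct_mulVec, dotProduct_comm, mulVec_transpose]

lemma mv_dp {a b : ℕ} (M : Matrix (Fin a) (Fin b) ℝ) (v : Fin b → ℝ) (w : Fin a → ℝ) :
    (M *ᵥ v) ⬝ᵥ w = v ⬝ᵥ Mᵀ *ᵥ w := by
  rw [dotProduct_comm, dp_swap]

lemma hasDeriv_dot {n : ℕ} {f g : ℝ → Fin n → ℝ} {f' g' : Fin n → ℝ} {S : Set ℝ} {t : ℝ}
    (hf : HasDerivWithinAt f f' S t) (hg : HasDerivWithinAt g g' S t) :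
    HasDerivWithinAt (fun τ => f τ ⬝ᵥ g τ) (f' ⬝ᵥ g t + f t ⬝ᵥ g') S t := by
  have h : ∀ i ∈ Finset.univ, HasDerivWithinAt (fun τ => f τ i * g τ i)
      (f' i * g t i + f t i * g' i) S t :=
    fun i _ => (hasDerivWithinAt_pi.1 hf i).mul (hasDerivWithinAt_pi.1 hg i)
  have := HasDerivWithinAt.fun_sum h
  simpa [dotProduct, Finset.sum_add_distrib] using this

lemma hasDeriv_mulVec {n p : ℕ} {A : ℝ → Matrix (Fin n) (Fin p) ℝ}
    {A' : Matrix (Fin n) (Fin p) ℝ} {x : ℝ → Fin p → ℝ} {x' : Fin p → ℝ} {S : Set ℝ} {t : ℝ}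
    (hA : HasDerivWithinAt A A' S t) (hx : HasDerivWithinAt x x' S t) :
    HasDerivWithinAt (fun τ => (A τ) *ᵥ (x τ)) (A' *ᵥ (x t) + (A t) *ᵥ x') S t := by
  rw [hasDerivWithinAt_pi]
  intro i
  have hAi : HasDerivWithinAt (fun τ => A τ i) (A' i) S t := hasDerivWithinAt_pi.1 hA i
  simpa [Matrix.mulVec, Pi.add_apply] using hasDeriv_dot hAi hx

lemma contOn_dot {n : ℕ} {f g : ℝ → Fin n → ℝ} {S : Set ℝ}
    (hf : ContinuousOn f S) (hg : ContinuousOn g S) :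
    ContinuousOn (fun τ => f τ ⬝ᵥ g τ) S := by
  simp only [dotProduct]
  apply continuousOn_finset_sum
  intro i _
  exact ((continuousOn_pi.1 hf i).mul (continuousOn_pi.1 hg i))

lemma contOn_mulVec {n p : ℕ} {A : ℝ → Matrix (Fin n) (Fin p) ℝ} {x : ℝ → Fin p → ℝ} {S : Set ℝ}
    (hA : ContinuousOn A S) (hx : ContinuousOn x S) :
    ContinuousOn (fun τ => (A τ) *ᵥ (x τ)) S := by
  apply continuousOn_pi.2
  intro i
  exact contOn_dot (continuousOn_pi.1 hA i) hx

lemma contOn_const_mul {a b c : ℕ} {A : ℝ → Matrix (Fin b) (Fin c) ℝ}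
    (C : Matrix (Fin a) (Fin b) ℝ) {S : Set ℝ} (hA : ContinuousOn A S) :
    ContinuousOn (fun t => C * A t) S := by
  apply continuousOn_pi.2
  intro i
  apply continuousOn_pi.2
  intro j
  simp only [Matrix.mul_apply]
  apply continuousOn_finset_sum
  intro k _
  exact continuousOn_const.mul ((continuousOn_pi.1 (continuousOn_pi.1 hA k)) j)

/-- The completion-of-squares pointwise identity. -/
lemma alg {l m : ℕ}
    (Lam : Matrix (Fin l) (Fin l) ℝ) (hLam : Lamᵀ = Lam)
    (Bh : Matrix (Fin l) (Fin m) ℝ)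
    (Rh : Matrix (Fin m) (Fin m) ℝ) (hRinv : Rh⁻¹ᵀ = Rh⁻¹)
    (hRmul : Rh * Rh⁻¹ = 1)
    (Q₂ Pt : Matrix (Fin l) (Fin l) ℝ) (hPt : Ptᵀ = Pt)
    (x w bb bq : Fin l → ℝ) (uu : Fin m → ℝ) :
    ((Lam *ᵥ x + Bh *ᵥ uu + bb) ⬝ᵥ Pt *ᵥ x
      + x ⬝ᵥ ((-(Pt * Lam) - Lam * Pt - Q₂ + Pt * Bh * Rh⁻¹ * Bhᵀ * Pt) *ᵥ x
          + Pt *ᵥ (Lam *ᵥ x + Bh *ᵥ uu + bb)))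
    - (((Pt * Bh * Rh⁻¹ * Bhᵀ - Lam) *ᵥ w + bq + (2 : ℝ) • Pt *ᵥ bb) ⬝ᵥ x
        + w ⬝ᵥ (Lam *ᵥ x + Bh *ᵥ uu + bb))
    =
    (uu - (-(Rh⁻¹ * Bhᵀ * Pt) *ᵥ x + (1 / 2 : ℝ) • (Rh⁻¹ * Bhᵀ) *ᵥ w)) ⬝ᵥ
        Rh *ᵥ (uu - (-(Rh⁻¹ * Bhᵀ * Pt) *ᵥ x + (1 / 2 : ℝ) • (Rh⁻¹ * Bhᵀ) *ᵥ w))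
    + (-(1 / 4 : ℝ) * (w ⬝ᵥ (Bh * Rh⁻¹ * Bhᵀ) *ᵥ w) - w ⬝ᵥ bb)
    - (bq ⬝ᵥ x + x ⬝ᵥ Q₂ *ᵥ x + uu ⬝ᵥ Rh *ᵥ uu) := by
  have hc1 : Rh * (Rh⁻¹ * Bhᵀ * Pt) = Bhᵀ * Pt := by
    rw [Matrix.mul_assoc Rh⁻¹ Bhᵀ Pt, ← Matrix.mul_assoc Rh, hRmul, Matrix.one_mul]
  have hc2 : Rh * (Rh⁻¹ * Bhᵀ) = Bhᵀ := by rw [← Matrix.mul_assoc, hRmul, Matrix.one_mul]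
  simp only [Matrix.add_mulVec, Matrix.sub_mulVec, Matrix.neg_mulVec, Matrix.mulVec_add,
    Matrix.mulVec_sub, Matrix.mulVec_neg, Matrix.mulVec_smul, Matrix.smul_mulVec,
    mulVec_mulVec, add_dotProduct, dotProduct_add, sub_dotProduct,
    dotProduct_sub, neg_dotProduct, dotProduct_neg, smul_dotProduct, dotProduct_smul,
    smul_eq_mul, hc1, hc2]
  have hRmul2 : Rh⁻¹ * Rh = 1 :=
    Matrix.nonsing_inv_mul Rh (Matrix.isUnit_det_of_right_inverse hRmul)
  simp only [mv_dp, mulVec_mulVec, transpose_mul, transpose_transpose, hLam, hPt, hRinv,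
    Matrix.mul_assoc, hRmul2, Matrix.mul_one, Matrix.one_mul]
  have e1 : x ⬝ᵥ (Pt * Bh) *ᵥ uu = uu ⬝ᵥ (Bhᵀ * Pt) *ᵥ x := by
    rw [dp_swap, transpose_mul, hPt]
  have e2 : x ⬝ᵥ (Pt * (Bh * (Rh⁻¹ * Bhᵀ))) *ᵥ w = w ⬝ᵥ (Bh * (Rh⁻¹ * (Bhᵀ * Pt))) *ᵥ x := by
    rw [dp_swap]; congr 1; simp [transpose_mul, hPt, hRinv, Matrix.mul_assoc]
  have e3 : uu ⬝ᵥ Bhᵀ *ᵥ w = w ⬝ᵥ Bh *ᵥ uu := by rw [dp_swap, transpose_transpose]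
  have e4 : bb ⬝ᵥ Pt *ᵥ x = x ⬝ᵥ Pt *ᵥ bb := by rw [dp_swap, hPt]
  rw [e1, e2, e3, e4]
  ring

end ExtLQRAux

open ExtLQRAux

/-- Optimality of the extended linear–quadratic regulator: the feedback law
`u* = −R̂⁻¹B̂ᵀP(t)q* + (1/2)R̂⁻¹B̂ᵀs(t)`, built from the solution `P` of the Riccati
differential equation (with `P(t₁) = M₂`) and the compensation vector `s`
(with `s(t₁) = −b_M`), minimizes the extended quadratic cost `J̃` among all continuous
controls steering `q' = Λq + B̂u + b` from `q(t₀) = q₀`. -/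
theorem extended_LQR_optimality
    {l m : ℕ} (t₀ t₁ : ℝ) (ht : t₀ ≤ t₁)
    (Lam : Matrix (Fin l) (Fin l) ℝ) (hLam : Lamᵀ = Lam)
    (Bh : Matrix (Fin l) (Fin m) ℝ)
    (Rh : Matrix (Fin m) (Fin m) ℝ) (hRh : Rh.PosDef)
    (Q₂ : Matrix (Fin l) (Fin l) ℝ) (hQ₂ : Q₂.PosSemidef)
    (M₂ : Matrix (Fin l) (Fin l) ℝ) (hM₂ : M₂.PosSemidef)
    (bM : Fin l → ℝ) (b bQ : ℝ → Fin l → ℝ)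
    (hb : ContinuousOn b (Set.Icc t₀ t₁)) (hbQ : ContinuousOn bQ (Set.Icc t₀ t₁))
    (q₀ : Fin l → ℝ)
    -- the Riccati solution P, symmetric, with terminal condition P(t₁) = M₂
    (P : ℝ → Matrix (Fin l) (Fin l) ℝ)
    (hPsymm : ∀ t ∈ Set.Icc t₀ t₁, (P t)ᵀ = P t)
    (hPcont : ContinuousOn P (Set.Icc t₀ t₁))
    (hP : ∀ t ∈ Set.Icc t₀ t₁, HasDerivWithinAt P
      (-(P t * Lam) - Lam * P t - Q₂ + P t * Bh * Rh⁻¹ * Bhᵀ * P t) (Set.Icc t₀ t₁) t)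
    (hP1 : P t₁ = M₂)
    -- the compensation vector s with terminal condition s(t₁) = −b_M
    (s : ℝ → Fin l → ℝ)
    (hscont : ContinuousOn s (Set.Icc t₀ t₁))
    (hs : ∀ t ∈ Set.Icc t₀ t₁, HasDerivWithinAt s
      ((P t * Bh * Rh⁻¹ * Bhᵀ - Lam).mulVec (s t) + bQ t + (2 : ℝ) • (P t).mulVec (b t))
      (Set.Icc t₀ t₁) t)
    (hs1 : s t₁ = -bM)
    -- the closed-loop optimal trajectory q*
    (qstar : ℝ → Fin l → ℝ)
    (hqstar : ∀ t ∈ Set.Icc t₀ t₁, HasDerivWithinAt qstar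
      ((Lam - Bh * Rh⁻¹ * Bhᵀ * P t).mulVec (qstar t) +
        (1 / 2 : ℝ) • (Bh * Rh⁻¹ * Bhᵀ).mulVec (s t) + b t) (Set.Icc t₀ t₁) t)
    (hqstar0 : qstar t₀ = q₀)
    -- an arbitrary continuous competing control u with its state trajectory q_u
    (u : ℝ → Fin m → ℝ) (hu : ContinuousOn u (Set.Icc t₀ t₁))
    (qu : ℝ → Fin l → ℝ)
    (hqu : ∀ t ∈ Set.Icc t₀ t₁, HasDerivWithinAt qu
      (Lam.mulVec (qu t) + Bh.mulVec (u t) + b t) (Set.Icc t₀ t₁) t)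
    (hqu0 : qu t₀ = q₀) :
    (∫ t in t₀..t₁,
        (bQ t ⬝ᵥ qu t + qu t ⬝ᵥ Q₂.mulVec (qu t) + u t ⬝ᵥ Rh.mulVec (u t))) +
      bM ⬝ᵥ qu t₁ + qu t₁ ⬝ᵥ M₂.mulVec (qu t₁) ≥
    (∫ t in t₀..t₁,
        (bQ t ⬝ᵥ qstar t + qstar t ⬝ᵥ Q₂.mulVec (qstar t) +
          (-(Rh⁻¹ * Bhᵀ * P t).mulVec (qstar t) + (1 / 2 : ℝ) • (Rh⁻¹ * Bhᵀ).mulVec (s t)) ⬝ᵥ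
            Rh.mulVec
              (-(Rh⁻¹ * Bhᵀ * P t).mulVec (qstar t) +
                (1 / 2 : ℝ) • (Rh⁻¹ * Bhᵀ).mulVec (s t)))) +
      bM ⬝ᵥ qstar t₁ + qstar t₁ ⬝ᵥ M₂.mulVec (qstar t₁) := by
  have hRhT : Rhᵀ = Rh := (by simpa using hRh.1 : Rh.IsSymm).eq
  have hRmul : Rh * Rh⁻¹ = 1 := Matrix.mul_nonsing_inv Rh (isUnit_iff_ne_zero.2 hRh.det_pos.ne')
  have hRinv : Rh⁻¹ᵀ = Rh⁻¹ := by rw [Matrix.transpose_nonsing_inv, hRhT]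
  set I := Set.Icc t₀ t₁ with hI
  -- the constant (trajectory independent) part of the cost
  set g : ℝ → ℝ := fun t => -(1 / 4 : ℝ) * (s t ⬝ᵥ (Bh * Rh⁻¹ * Bhᵀ) *ᵥ s t) - s t ⬝ᵥ b t with hg
  have hgcont : ContinuousOn g I :=
    (continuousOn_const.mul (contOn_dot hscont (contOn_mulVec continuousOn_const hscont))).sub
      (contOn_dot hscont hb)
  -- the key identity, valid for any admissible pair (control v, trajectory q)
  have key : ∀ (v : ℝ → Fin m → ℝ) (q : ℝ → Fin l → ℝ),
      ContinuousOn v I →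
      (∀ t ∈ I, HasDerivWithinAt q (Lam *ᵥ q t + Bh *ᵥ v t + b t) I t) →
      q t₀ = q₀ →
      (∫ t in t₀..t₁, (bQ t ⬝ᵥ q t + q t ⬝ᵥ Q₂ *ᵥ q t + v t ⬝ᵥ Rh *ᵥ v t))
        + bM ⬝ᵥ q t₁ + q t₁ ⬝ᵥ M₂ *ᵥ q t₁
      = (∫ t in t₀..t₁,
          ((v t - (-(Rh⁻¹ * Bhᵀ * P t) *ᵥ q t + (1 / 2 : ℝ) • (Rh⁻¹ * Bhᵀ) *ᵥ s t)) ⬝ᵥ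
            Rh *ᵥ (v t - (-(Rh⁻¹ * Bhᵀ * P t) *ᵥ q t + (1 / 2 : ℝ) • (Rh⁻¹ * Bhᵀ) *ᵥ s t))))
        + ((∫ t in t₀..t₁, g t) + (q₀ ⬝ᵥ (P t₀) *ᵥ q₀ - s t₀ ⬝ᵥ q₀)) := by
    intro v q hv hq hq0
    have hqc : ContinuousOn q I := fun t htI => (hq t htI).continuousWithinAt
    set uh : ℝ → Fin m → ℝ :=
      fun t => -(Rh⁻¹ * Bhᵀ * P t) *ᵥ q t + (1 / 2 : ℝ) • (Rh⁻¹ * Bhᵀ) *ᵥ s t with huh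
    have huhc : ContinuousOn uh I := by
      apply ContinuousOn.add
      · exact contOn_mulVec ((contOn_const_mul (Rh⁻¹ * Bhᵀ) hPcont)).neg hqc
      · exact (contOn_mulVec (A := fun _ => Rh⁻¹ * Bhᵀ) continuousOn_const hscont).const_smul (1 / 2 : ℝ)
    set r : ℝ → ℝ := fun t => (v t - uh t) ⬝ᵥ Rh *ᵥ (v t - uh t) with hr
    set L : ℝ → ℝ := fun t => bQ t ⬝ᵥ q t + q t ⬝ᵥ Q₂ *ᵥ q t + v t ⬝ᵥ Rh *ᵥ v t with hL
    have hrcont : ContinuousOn r I :=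
      contOn_dot (hv.sub huhc) (contOn_mulVec continuousOn_const (hv.sub huhc))
    have hLcont : ContinuousOn L I :=
      ((contOn_dot hbQ hqc).add (contOn_dot hqc (contOn_mulVec continuousOn_const hqc))).add
        (contOn_dot hv (contOn_mulVec continuousOn_const hv))
    set W : ℝ → ℝ := fun t => q t ⬝ᵥ (P t) *ᵥ q t - s t ⬝ᵥ q t with hW
    have hWc : ContinuousOn W I :=
      (contOn_dot hqc (contOn_mulVec hPcont hqc)).sub (contOn_dot hscont hqc)
    have hWd : ∀ t ∈ I, HasDerivWithinAt W (r t + g t - L t) I t := by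
      intro t htI
      have h1 := (hasDeriv_dot (hq t htI) (hasDeriv_mulVec (hP t htI) (hq t htI))).sub
        (hasDeriv_dot (hs t htI) (hq t htI))
      have halg := alg Lam hLam Bh Rh hRinv hRmul Q₂ (P t) (hPsymm t htI)
        (q t) (s t) (b t) (bQ t) (v t)
      rw [← halg]
      exact h1
    -- integrability
    have hIcc : Set.uIcc t₀ t₁ = I := by rw [hI, Set.uIcc_of_le ht]
    have hrI : IntervalIntegrable r volume t₀ t₁ := by
      apply ContinuousOn.intervalIntegrable; rwa [hIcc]
    have hgI : IntervalIntegrable g volume t₀ t₁ := by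
      apply ContinuousOn.intervalIntegrable; rwa [hIcc]
    have hLI : IntervalIntegrable L volume t₀ t₁ := by
      apply ContinuousOn.intervalIntegrable; rwa [hIcc]
    -- fundamental theorem of calculus
    have hftc : ∫ t in t₀..t₁, (r t + g t - L t) = W t₁ - W t₀ := by
      apply intervalIntegral.integral_eq_sub_of_hasDeriv_right_of_le ht hWc
      · intro x hx
        exact (hWd x ⟨hx.1.le, hx.2.le⟩).mono_of_mem_nhdsWithin
          (Icc_mem_nhdsGT_of_mem ⟨hx.1.le, hx.2⟩)
      · exact (hrI.add hgI).sub hLI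
    rw [intervalIntegral.integral_sub (hrI.add hgI) hLI,
      intervalIntegral.integral_add hrI hgI] at hftc
    have hW1 : W t₁ = q t₁ ⬝ᵥ M₂ *ᵥ q t₁ + bM ⬝ᵥ q t₁ := by
      rw [hW]; simp only [hP1, hs1, neg_dotProduct]
      rw [dotProduct_comm bM (q t₁)]; ring
    have hW0 : W t₀ = q₀ ⬝ᵥ (P t₀) *ᵥ q₀ - s t₀ ⬝ᵥ q₀ := by simp only [hW]; rw [hq0]
    have : (∫ t in t₀..t₁, L t) = (∫ t in t₀..t₁, r t) + (∫ t in t₀..t₁, g t) - (W t₁ - W t₀) := by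
      linarith [hftc]
    rw [hW1, hW0] at this
    calc (∫ t in t₀..t₁, (bQ t ⬝ᵥ q t + q t ⬝ᵥ Q₂ *ᵥ q t + v t ⬝ᵥ Rh *ᵥ v t))
          + bM ⬝ᵥ q t₁ + q t₁ ⬝ᵥ M₂ *ᵥ q t₁
        = (∫ t in t₀..t₁, L t) + bM ⬝ᵥ q t₁ + q t₁ ⬝ᵥ M₂ *ᵥ q t₁ := rfl
      _ = (∫ t in t₀..t₁, r t)
          + ((∫ t in t₀..t₁, g t) + (q₀ ⬝ᵥ (P t₀) *ᵥ q₀ - s t₀ ⬝ᵥ q₀)) := by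
          rw [this]; ring
  -- the optimal control
  set us : ℝ → Fin m → ℝ :=
    fun t => -(Rh⁻¹ * Bhᵀ * P t) *ᵥ qstar t + (1 / 2 : ℝ) • (Rh⁻¹ * Bhᵀ) *ᵥ s t with hus
  have hqsc : ContinuousOn qstar I := fun t htI => (hqstar t htI).continuousWithinAt
  have husc : ContinuousOn us I := by
    apply ContinuousOn.add
    · exact contOn_mulVec ((contOn_const_mul (Rh⁻¹ * Bhᵀ) hPcont)).neg hqsc
    · exact (contOn_mulVec (A := fun _ => Rh⁻¹ * Bhᵀ) continuousOn_const hscont).const_smul (1 / 2 : ℝ)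
  have hqs' : ∀ t ∈ I, HasDerivWithinAt qstar (Lam *ᵥ qstar t + Bh *ᵥ us t + b t) I t := by
    intro t htI
    have heq : (Lam - Bh * Rh⁻¹ * Bhᵀ * P t) *ᵥ (qstar t) +
        (1 / 2 : ℝ) • (Bh * Rh⁻¹ * Bhᵀ) *ᵥ (s t) + b t
        = Lam *ᵥ qstar t + Bh *ᵥ us t + b t := by
      simp only [hus, Matrix.sub_mulVec, Matrix.add_mulVec, Matrix.mulVec_add, Matrix.mulVec_neg,
        Matrix.neg_mulVec, Matrix.mul_neg, Matrix.mulVec_smul, mulVec_mulVec, Matrix.mul_assoc,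
        sub_eq_add_neg, add_assoc]
    rw [← heq]
    exact hqstar t htI
  have h1 := key u qu hu hqu hqu0
  have h2 := key us qstar husc hqs' hqstar0
  -- residual term vanishes for the optimal pair
  have hzero : (∫ t in t₀..t₁,
      ((us t - (-(Rh⁻¹ * Bhᵀ * P t) *ᵥ qstar t + (1 / 2 : ℝ) • (Rh⁻¹ * Bhᵀ) *ᵥ s t)) ⬝ᵥ
        Rh *ᵥ (us t - (-(Rh⁻¹ * Bhᵀ * P t) *ᵥ qstar t + (1 / 2 : ℝ) • (Rh⁻¹ * Bhᵀ) *ᵥ s t)))) = 0 := by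
    simp [hus]
  rw [hzero, zero_add] at h2
  -- residual term is nonnegative in general
  have hnonneg : 0 ≤ ∫ t in t₀..t₁,
      ((u t - (-(Rh⁻¹ * Bhᵀ * P t) *ᵥ qu t + (1 / 2 : ℝ) • (Rh⁻¹ * Bhᵀ) *ᵥ s t)) ⬝ᵥ
        Rh *ᵥ (u t - (-(Rh⁻¹ * Bhᵀ * P t) *ᵥ qu t + (1 / 2 : ℝ) • (Rh⁻¹ * Bhᵀ) *ᵥ s t))) := by
    apply intervalIntegral.integral_nonneg ht
    intro τ _
    have := hRh.posSemidef.dotProduct_mulVec_nonneg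
      ((u τ - (-(Rh⁻¹ * Bhᵀ * P τ) *ᵥ qu τ + (1 / 2 : ℝ) • (Rh⁻¹ * Bhᵀ) *ᵥ s τ)))
    simpa using this
  rw [ge_iff_le]
  simp only [hus, Matrix.neg_mulVec] at h1 h2 hnonneg
  linarith [h1, h2, hnonneg]
end
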